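/- On the Hilbert space ℂ^d ⊗ ℂ^d define, for X ∈ M(ℂ^d), D(X) := X ⊗ 1 − 1 ⊗ X, and let K be the selfadjoint operator on (ℂ^d ⊗ ℂ^d) ⊗ (ℂ^d ⊗ ℂ^d) given by K := Σ_{i=1}^{d} D(E_{ii}) ⊗ D(E_{ii}) + (1/2) Σ_{1 ≤ j ≠ k ≤ d} D(T_{jk}) ⊗ D(T_{jk}), where for j < k, T_{jk} := i(E_{jk} − E_{kj}) and T_{kj} := E_{jk} + E_{kj}. Then for all density matrices σ_1, σ_2 on ℂ^d: Tr( ((σ_1 ⊗ σ_2) ⊗ (σ_1 ⊗ σ_2)) K ) = ‖σ_1 − σ_2‖₂², the squared Hilbert–Schmidt (Frobenius) norm of σ_1 − σ_2. -/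

import Mathlib

open scoped BigOperators Kronecker
open Matrix
open scoped ComplexOrder

private lemma trace_mul_stdBasis {d : ℕ} (M : Matrix (Fin d) (Fin d) ℂ) (a b : Fin d) :
    (M * Matrix.single a b (1:ℂ)).trace = M b a := by
  simp [Matrix.trace, Matrix.mul_apply, Matrix.single, Matrix.diag, ite_and,
    Finset.sum_ite_eq]

/-- For `j < k`, `T_{jk} := i(E_{jk} − E_{kj})`, and `T_{kj} := E_{jk} + E_{kj}`. -/
noncomputable def TMat {d : ℕ} (a b : Fin d) : Matrix (Fin d) (Fin d) ℂ :=
  if a < b then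
    Complex.I • (Matrix.single a b 1 - Matrix.single b a 1)
  else
    Matrix.single b a 1 + Matrix.single a b 1

/-- `D(X) := X ⊗ 1 − 1 ⊗ X` on `ℂ^d ⊗ ℂ^d`. -/
noncomputable def DOp {d : ℕ} (X : Matrix (Fin d) (Fin d) ℂ) :
    Matrix (Fin d × Fin d) (Fin d × Fin d) ℂ :=
  X ⊗ₖ (1 : Matrix (Fin d) (Fin d) ℂ) - (1 : Matrix (Fin d) (Fin d) ℂ) ⊗ₖ X

private lemma trace_mul_DOp {d : ℕ} (σ₁ σ₂ X : Matrix (Fin d) (Fin d) ℂ)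
    (h1 : σ₁.trace = 1) (h2 : σ₂.trace = 1) :
    ((σ₁ ⊗ₖ σ₂) * DOp X).trace = ((σ₁ - σ₂) * X).trace := by
  rw [DOp, Matrix.mul_sub, Matrix.trace_sub, ← Matrix.mul_kronecker_mul,
    ← Matrix.mul_kronecker_mul, Matrix.trace_kronecker, Matrix.trace_kronecker,
    Matrix.sub_mul, Matrix.trace_sub]
  simp only [Matrix.mul_one, Matrix.one_mul, h1, h2]
  ring

private lemma sum_erase_swap {d : ℕ} (g : Fin d → Fin d → ℂ) :
    (∑ j, ∑ k ∈ Finset.univ.erase j, g j k) = ∑ j, ∑ k ∈ Finset.univ.erase j, g k j := by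
  have h : ∀ h : Fin d → Fin d → ℂ,
      (∑ j, ∑ k ∈ Finset.univ.erase j, h j k)
        = ∑ j : Fin d, ∑ k : Fin d, if k ≠ j then h j k else 0 := by
    intro h
    refine Finset.sum_congr rfl fun j _ => ?_
    rw [← Finset.sum_filter, Finset.filter_ne']
  rw [h, h, Finset.sum_comm]
  exact Finset.sum_congr rfl fun j _ => Finset.sum_congr rfl fun k _ => by
    simp only [ne_comm]

/-- **An unbiased estimator of the squared Hilbert–Schmidt distance between two states:**
`Tr((σ₁ ⊗ σ₂) ⊗ (σ₁ ⊗ σ₂) K) = ‖σ₁ − σ₂‖₂²` for all density matrices `σ₁, σ₂`. -/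
theorem stmt19 {d : ℕ}
    (K : Matrix ((Fin d × Fin d) × Fin d × Fin d) ((Fin d × Fin d) × Fin d × Fin d) ℂ)
    (hK : K =
      (∑ i : Fin d, DOp (Matrix.single i i 1) ⊗ₖ DOp (Matrix.single i i 1)) +
        (2 : ℂ)⁻¹ • ∑ j : Fin d, ∑ k ∈ Finset.univ.erase j, DOp (TMat j k) ⊗ₖ DOp (TMat j k))
    (σ₁ σ₂ : Matrix (Fin d) (Fin d) ℂ)
    (hσ₁ : σ₁.PosSemidef) (hσ₁tr : σ₁.trace = 1)
    (hσ₂ : σ₂.PosSemidef) (hσ₂tr : σ₂.trace = 1) :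
    (((σ₁ ⊗ₖ σ₂) ⊗ₖ (σ₁ ⊗ₖ σ₂)) * K).trace = ((σ₁ - σ₂)ᴴ * (σ₁ - σ₂)).trace := by
  set δ := σ₁ - σ₂ with hδ
  have hherm : δᴴ = δ := hσ₁.1.sub hσ₂.1
  have key : ∀ X : Matrix (Fin d) (Fin d) ℂ,
      (((σ₁ ⊗ₖ σ₂) ⊗ₖ (σ₁ ⊗ₖ σ₂)) * (DOp X ⊗ₖ DOp X)).trace
        = (δ * X).trace * (δ * X).trace := by
    intro X
    rw [← Matrix.mul_kronecker_mul, Matrix.trace_kronecker,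
      trace_mul_DOp σ₁ σ₂ X hσ₁tr hσ₂tr]
  have hT : ∀ a b : Fin d, (δ * TMat a b).trace
      = if a < b then Complex.I * (δ b a - δ a b) else δ b a + δ a b := by
    intro a b
    rw [TMat]
    split
    · rw [Matrix.mul_smul, Matrix.trace_smul, Matrix.mul_sub, Matrix.trace_sub,
        trace_mul_stdBasis, trace_mul_stdBasis, smul_eq_mul]
    · rw [Matrix.mul_add, Matrix.trace_add, trace_mul_stdBasis, trace_mul_stdBasis]
      ring
  have hpair : ∀ j k : Fin d, j ≠ k →
      (δ * TMat j k).trace * (δ * TMat j k).trace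
        + (δ * TMat k j).trace * (δ * TMat k j).trace
        = 4 * (δ j k * δ k j) := by
    intro j k hne
    rcases hne.lt_or_gt with h | h
    · rw [hT, hT, if_pos h, if_neg h.asymm]
      linear_combination (δ k j - δ j k) ^ 2 * Complex.I_sq
    · rw [hT, hT, if_neg h.asymm, if_pos h]
      linear_combination (δ j k - δ k j) ^ 2 * Complex.I_sq
  subst hK
  rw [Matrix.mul_add, Matrix.trace_add, Matrix.mul_smul, Matrix.trace_smul]
  simp only [Finset.mul_sum, Matrix.trace_sum, key, trace_mul_stdBasis, smul_eq_mul]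
  -- compute the RHS as an entrywise double sum
  rw [hherm]
  have hRHS : (δ * δ).trace = ∑ m, ∑ k, δ m k * δ k m := by
    simp [Matrix.trace, Matrix.mul_apply, Matrix.diag]
  rw [hRHS]
  have h2' : (∑ j, ∑ k ∈ Finset.univ.erase j,
        (δ * TMat j k).trace * (δ * TMat j k).trace)
      + (∑ j, ∑ k ∈ Finset.univ.erase j,
        (δ * TMat j k).trace * (δ * TMat j k).trace)
      = 4 * ∑ j, ∑ k ∈ Finset.univ.erase j, δ j k * δ k j := by
    nth_rewrite 2 [sum_erase_swap]
    rw [← Finset.sum_add_distrib, Finset.mul_sum]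
    refine Finset.sum_congr rfl fun j _ => ?_
    rw [← Finset.sum_add_distrib, Finset.mul_sum]
    refine Finset.sum_congr rfl fun k hk => hpair j k (Finset.ne_of_mem_erase hk).symm
  have hStsq : (∑ j, ∑ k ∈ Finset.univ.erase j,
        (δ * TMat j k).trace * (δ * TMat j k).trace)
      = 2 * ∑ j, ∑ k ∈ Finset.univ.erase j, δ j k * δ k j := by
    apply mul_left_cancel₀ (two_ne_zero (α := ℂ))
    rw [two_mul, h2']
    ring
  have hpull : (∑ j, ∑ k ∈ Finset.univ.erase j,
        2⁻¹ * ((δ * TMat j k).trace * (δ * TMat j k).trace))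
      = 2⁻¹ * ∑ j, ∑ k ∈ Finset.univ.erase j,
        (δ * TMat j k).trace * (δ * TMat j k).trace := by
    rw [Finset.mul_sum]
    exact Finset.sum_congr rfl fun j _ => (Finset.mul_sum _ _ _).symm
  have hsplit : (∑ m : Fin d, ∑ k : Fin d, δ m k * δ k m)
      = ∑ m : Fin d, (δ m m * δ m m + ∑ k ∈ Finset.univ.erase m, δ m k * δ k m) := by
    refine Finset.sum_congr rfl fun m _ => ?_
    exact (Finset.add_sum_erase _ _ (Finset.mem_univ m)).symm
  rw [hpull, hStsq, hsplit, Finset.sum_add_distrib]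
  ring
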